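/- Let W be a channel with a capacity-achieving input set P*_W = {P : I(P;W) = C(W)}, and for P ∈ P(X) let P*(P) be a closest element of P*_W in ℓ₂ distance. Suppose β₁, β₂ > 0 satisfy I(P;W) ≤ C(W) − β₁‖P − P*(P)‖₂² and |√V(P,W) − √V(P*(P),W)| ≤ β₂‖P − P*(P)‖₂ for all P in a set S. Then for every P ∈ S with V(P*(P),W) ≤ V_ε(W) (e.g., ε < 1/2 and V_ε the minimum over capacity-achievers) and every n ∈ ℤ⁺ and ε ∈ (0,1/2): n·I(P;W) + √(n·V(P,W))·Φ⁻¹(ε) ≤ n·C(W) + √(n·V_ε(W))·Φ⁻¹(ε) + (β₂|Φ⁻¹(ε)|)²/(4β₁). -/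
import Mathlib


open Finset

/-- Mutual information `I(P;W)`. -/
noncomputable def mutualInfo {X Y : Type*} [Fintype X] [Fintype Y]
    (P : X → ℝ) (W : X → Y → ℝ) : ℝ :=
  ∑ x, ∑ y, P x * W x y * Real.log (W x y / ∑ z, P z * W z y)

/-- Channel capacity `C(W)`. -/
noncomputable def capacity {X Y : Type*} [Fintype X] [Fintype Y]
    (W : X → Y → ℝ) : ℝ :=
  sSup {c : ℝ | ∃ P : X → ℝ, (∀ x, 0 ≤ P x) ∧ (∑ x, P x = 1) ∧ c = mutualInfo P W}

/-- The probability simplex on a finite alphabet. -/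
def probSimplex (X : Type*) [Fintype X] : Set (X → ℝ) :=
  {P | (∀ x, 0 ≤ P x) ∧ ∑ x, P x = 1}

/-- The conditional information variance `V(Q,W)`. -/
noncomputable def condInfoVar {X Y : Type*} [Fintype X] [Fintype Y]
    (Q : X → ℝ) (W : X → Y → ℝ) : ℝ :=
  ∑ x, ∑ y, Q x * W x y *
    (Real.log (W x y / ∑ z, Q z * W z y)
      - ∑ b, W x b * Real.log (W x b / ∑ z, Q z * W z b)) ^ 2

/-- The set of capacity-achieving input distributions. -/
noncomputable def capAchievers {X Y : Type*} [Fintype X] [Fintype Y]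
    (W : X → Y → ℝ) : Set (X → ℝ) :=
  {P | P ∈ probSimplex X ∧ mutualInfo P W = capacity W}

/-- The `ε`-dispersion `V_ε(W)`. -/
noncomputable def epsDispersion {X Y : Type*} [Fintype X] [Fintype Y]
    (ε : ℝ) (W : X → Y → ℝ) : ℝ :=
  if ε < 1 / 2 then sInf {v : ℝ | ∃ P ∈ capAchievers W, v = condInfoVar P W}
  else sSup {v : ℝ | ∃ P ∈ capAchievers W, v = condInfoVar P W}

/-- The `ℓ₂` distance between two input distributions. -/
noncomputable def l2dist {X : Type*} [Fintype X] (P Q : X → ℝ) : ℝ :=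
  Real.sqrt (∑ x, (P x - Q x) ^ 2)

/-- The set `S₃(δ)` of distributions `ℓ₂`-far from every capacity achiever. -/
noncomputable def farSet {X Y : Type*} [Fintype X] [Fintype Y]
    (W : X → Y → ℝ) (δ : ℝ) : Set (X → ℝ) :=
  {P | P ∈ probSimplex X ∧
    δ < sInf {d : ℝ | ∃ P' ∈ capAchievers W, d = l2dist P P'}}

/-- Average error probability of a code with codewords `cw` and decoding regions `A`. -/
noncomputable def avgErr {X Y : Type*} [Fintype X] [Fintype Y] [DecidableEq Y]
    (W : X → Y → ℝ) (n M : ℕ)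
    (cw : Fin M → Fin n → X) (A : Fin M → Finset (Fin n → Y)) : ℝ :=
  (M : ℝ)⁻¹ * ∑ m, ∑ yn ∈ (A m)ᶜ, ∏ i, W (cw m i) (yn i)

/-- The decoding regions are disjoint and cover the output space. -/
def isDecoder {Y : Type*} [Fintype Y] [DecidableEq Y]
    (n M : ℕ) (A : Fin M → Finset (Fin n → Y)) : Prop :=
  (∀ m m', m ≠ m' → Disjoint (A m) (A m')) ∧ ∀ yn : Fin n → Y, ∃ m, yn ∈ A m

/-- All codewords have empirical composition (type) `Q`. -/
def hasComposition {X : Type*} [Fintype X] [DecidableEq X]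
    (n M : ℕ) (cw : Fin M → Fin n → X) (Q : X → ℝ) : Prop :=
  ∀ (m : Fin M) (a : X),
    ((Finset.univ.filter (fun i => cw m i = a)).card : ℝ) = n * Q a

/-- Standard normal density. -/
noncomputable def normalPDF (t : ℝ) : ℝ :=
  Real.exp (-t ^ 2 / 2) / Real.sqrt (2 * Real.pi)

/-- Standard normal distribution function. -/
noncomputable def normalCDF (t : ℝ) : ℝ := ∫ s in Set.Iic t, normalPDF s


open MeasureTheory in
lemma normalPDF_eq' (t : ℝ) : normalPDF t = Real.exp (-(1/2) * t ^ 2) / Real.sqrt (2 * Real.pi) := by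
  unfold normalPDF; ring_nf

open MeasureTheory in
lemma integrable_normalPDF' : MeasureTheory.Integrable normalPDF := by
  have h : Integrable (fun x : ℝ => Real.exp (-(1/2) * x ^ 2)) :=
    integrable_exp_neg_mul_sq (by norm_num)
  have := h.div_const (Real.sqrt (2 * Real.pi))
  exact this.congr (by filter_upwards with x; rw [normalPDF_eq'])

lemma normalPDF_nonneg' (t : ℝ) : 0 ≤ normalPDF t := by
  unfold normalPDF
  positivity

open MeasureTheory Set in
lemma normalCDF_zero' : normalCDF 0 = 1 / 2 := by
  have hint := integrable_normalPDF'
  have heven : ∀ x : ℝ, normalPDF (-x) = normalPDF x := by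
    intro x; unfold normalPDF; ring_nf
  have h1 : (∫ s in Iic (0:ℝ), normalPDF s) = ∫ s in Ioi (0:ℝ), normalPDF s := by
    rw [← neg_zero, ← integral_comp_neg_Iic, neg_zero]
    exact setIntegral_congr_fun measurableSet_Iic (fun x _ => (heven x).symm)
  have h2 : (∫ s in Iic (0:ℝ), normalPDF s) + (∫ s in Ioi (0:ℝ), normalPDF s)
      = ∫ s : ℝ, normalPDF s :=
    intervalIntegral.integral_Iic_add_Ioi hint.integrableOn hint.integrableOn
  have h3 : (∫ s : ℝ, normalPDF s) = 1 := by
    simp_rw [normalPDF_eq']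
    rw [MeasureTheory.integral_div, integral_gaussian]
    rw [div_eq_one_iff_eq (by positivity)]
    congr 1
    rw [div_div_eq_mul_div, div_one, mul_comm]
  have : 2 * normalCDF 0 = 1 := by
    unfold normalCDF; rw [two_mul]; nth_rewrite 2 [h1]; rw [h2, h3]
  linarith

open MeasureTheory Set in
lemma normalCDF_mono' {a b : ℝ} (hab : a ≤ b) : normalCDF a ≤ normalCDF b := by
  unfold normalCDF
  apply MeasureTheory.setIntegral_mono_set integrable_normalPDF'.integrableOn
  · filter_upwards with x using normalPDF_nonneg' x
  · exact HasSubset.Subset.eventuallyLE (Iic_subset_Iic.mpr hab)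

lemma Phinv_neg' {ε Φinv : ℝ} (hΦ : normalCDF Φinv = ε) (hε : ε < 1/2) : Φinv < 0 := by
  by_contra h
  push_neg at h
  have := normalCDF_mono' h
  rw [normalCDF_zero', hΦ] at this
  linarith

lemma condInfoVar_nonneg' {X Y : Type*} [Fintype X] [Fintype Y]
    {Q : X → ℝ} {W : X → Y → ℝ} (hW0 : ∀ x y, 0 ≤ W x y) (hQ : ∀ x, 0 ≤ Q x) :
    0 ≤ condInfoVar Q W := by
  apply Finset.sum_nonneg; intro x _
  apply Finset.sum_nonneg; intro y _
  exact mul_nonneg (mul_nonneg (hQ x) (hW0 x y)) (sq_nonneg _)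


theorem stmt14 {X Y : Type*} [Fintype X] [Fintype Y] [Nonempty X] [Nonempty Y]
    (W : X → Y → ℝ) (hW0 : ∀ x y, 0 ≤ W x y) (hW1 : ∀ x, ∑ y, W x y = 1)
    (Pstar : (X → ℝ) → (X → ℝ))
    (hPstar : ∀ P, Pstar P ∈ capAchievers W)
    (S : Set (X → ℝ)) (hS : S ⊆ probSimplex X)
    (β₁ β₂ : ℝ) (hβ₁ : 0 < β₁) (hβ₂ : 0 < β₂)
    (hI : ∀ P ∈ S, mutualInfo P W ≤ capacity W - β₁ * l2dist P (Pstar P) ^ 2)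
    (hVlip : ∀ P ∈ S, |Real.sqrt (condInfoVar P W)
      - Real.sqrt (condInfoVar (Pstar P) W)| ≤ β₂ * l2dist P (Pstar P))
    (ε : ℝ) (hε : ε ∈ Set.Ioo (0 : ℝ) (1 / 2))
    (Φinv : ℝ) (hΦ : normalCDF Φinv = ε) :
    ∀ P ∈ S, condInfoVar (Pstar P) W ≤ epsDispersion ε W →
      ∀ n : ℕ, 1 ≤ n →
        (n : ℝ) * mutualInfo P W + Real.sqrt (n * condInfoVar P W) * Φinv
          ≤ (n : ℝ) * capacity W + Real.sqrt (n * epsDispersion ε W) * Φinv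
            + (β₂ * |Φinv|) ^ 2 / (4 * β₁) := by

  intro P hPS hV n hn
  have hΦneg : Φinv < 0 := Phinv_neg' hΦ hε.2
  have hPsimp := hS hPS
  have hVP : 0 ≤ condInfoVar P W := condInfoVar_nonneg' hW0 hPsimp.1
  have hle : epsDispersion ε W ≤ condInfoVar (Pstar P) W := by
    unfold epsDispersion
    rw [if_pos hε.2]
    exact csInf_le ⟨0, by rintro v ⟨Q, hQ, rfl⟩; exact condInfoVar_nonneg' hW0 hQ.1.1⟩
      ⟨Pstar P, hPstar P, rfl⟩
  have hVeq : epsDispersion ε W = condInfoVar (Pstar P) W := le_antisymm hle hV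
  set t := l2dist P (Pstar P) with htdef
  have ht : 0 ≤ t := Real.sqrt_nonneg _
  have hnn : (0:ℝ) ≤ (n:ℝ) := Nat.cast_nonneg n
  set a := Real.sqrt (condInfoVar P W) with ha
  set b := Real.sqrt (condInfoVar (Pstar P) W) with hb
  have hsq1 : Real.sqrt ((n:ℝ) * condInfoVar P W) = Real.sqrt n * a := Real.sqrt_mul hnn _
  have hsq2 : Real.sqrt ((n:ℝ) * epsDispersion ε W) = Real.sqrt n * b := by
    rw [hVeq]; exact Real.sqrt_mul hnn _
  rw [hsq1, hsq2]
  have habs := hVlip P hPS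
  rw [abs_le] at habs
  have hab : b - β₂ * t ≤ a := by linarith [habs.1]
  have hIP := hI P hPS
  have hsn : (0:ℝ) ≤ Real.sqrt n := Real.sqrt_nonneg _
  have hn2 : Real.sqrt n ^ 2 = (n:ℝ) := Real.sq_sqrt hnn
  have h1 : Real.sqrt n * a * Φinv ≤ Real.sqrt n * (b - β₂ * t) * Φinv := by
    apply mul_le_mul_of_nonpos_right _ hΦneg.le
    exact mul_le_mul_of_nonneg_left hab hsn
  have habsΦ : |Φinv| = -Φinv := abs_of_neg hΦneg
  have hmul : (n:ℝ) * mutualInfo P W ≤ (n:ℝ) * capacity W - (n:ℝ) * β₁ * t ^ 2 := by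
    nlinarith [mul_le_mul_of_nonneg_left hIP hnn]
  have key : β₂ * |Φinv| * (Real.sqrt n * t) - β₁ * (Real.sqrt n * t) ^ 2
      ≤ (β₂ * |Φinv|) ^ 2 / (4 * β₁) := by
    rw [le_div_iff₀ (by positivity)]
    nlinarith [sq_nonneg (β₂ * |Φinv| - 2 * β₁ * (Real.sqrt n * t))]
  have e1 : β₁ * (Real.sqrt n * t) ^ 2 = (n:ℝ) * β₁ * t ^ 2 := by
    rw [mul_pow, hn2]; ring
  have e2 : β₂ * |Φinv| * (Real.sqrt n * t) = -(Real.sqrt n * (β₂ * t) * Φinv) := by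
    rw [habsΦ]; ring
  have e3 : Real.sqrt n * (b - β₂ * t) * Φinv
      = Real.sqrt n * b * Φinv - Real.sqrt n * (β₂ * t) * Φinv := by ring
  rw [e3] at h1
  rw [e1, e2] at key
  linarith [key, h1, hmul]
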